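/- Assume (A1) r has all coordinates strictly positive and (A2) M_{ij} ≤ 0 for all i ≠ j, where M = XᵀX and r = Xᵀy. Let s_* = max_{i ∈ {1,…,d}} (M⁻¹k)_i / (M⁻¹r)_i. Then for every s > s_*, the solution θ^{(ε)} of the DLN ODE with initial condition θ_i^{(ε)}(0) = C_i ε^{k_i} satisfies θ^{(ε)}(s · log(1/ε)) → M⁻¹r as ε → 0, where M⁻¹r is the unique minimizer of f. -/

import Mathlib

open Matrix
open Set Filter



private lemma dln_bound_aux {d : ℕ} (T : ℝ) (A : ℝ → Fin d → Fin d → ℝ)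
    (hA : ∀ i j, ContinuousOn (fun t => A t i j) (Icc 0 T)) :
    ∃ K : ℝ, 0 ≤ K ∧ ∀ t ∈ Icc (0:ℝ) T, ∀ i j, |A t i j| ≤ K := by
  choose Kf hKf using fun (p : Fin d × Fin d) =>
    IsCompact.exists_bound_of_continuousOn isCompact_Icc (hA p.1 p.2)
  refine ⟨∑ p : Fin d × Fin d, max (Kf p) 0, Finset.sum_nonneg fun p _ => le_max_right _ _,
    fun t ht i j => ?_⟩
  calc |A t i j| ≤ Kf (i, j) := hKf (i, j) t ht
    _ ≤ max (Kf (i, j)) 0 := le_max_left _ _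
    _ ≤ ∑ p : Fin d × Fin d, max (Kf p) 0 :=
        Finset.single_le_sum (f := fun p => max (Kf p) 0)
          (fun p _ => le_max_right _ _) (Finset.mem_univ (i, j))

private lemma coop_nonneg {d : ℕ} (A : ℝ → Fin d → Fin d → ℝ) (u : ℝ → Fin d → ℝ) (T : ℝ)
    (hu' : ∀ t ∈ Icc (0:ℝ) T, ∀ i, HasDerivAt (fun τ => u τ i) (∑ j, A t i j * u t j) t)
    (hA0 : ∀ t ∈ Icc (0:ℝ) T, ∀ i j, i ≠ j → 0 ≤ A t i j)
    (hK : ∃ K : ℝ, 0 ≤ K ∧ ∀ t ∈ Icc (0:ℝ) T, ∀ i j, |A t i j| ≤ K)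
    (hu0 : ∀ i, 0 ≤ u 0 i) :
    ∀ t ∈ Icc (0:ℝ) T, ∀ i, 0 ≤ u t i := by
  obtain ⟨K, hK0, hKb⟩ := hK
  set lam : ℝ := d * K + 1 with hlam
  have hlampos : 0 < lam := by positivity
  have hc : ∀ i, ContinuousOn (fun t => u t i) (Icc 0 T) :=
    fun i t ht => (hu' t ht i).continuousAt.continuousWithinAt
  have key : ∀ δ > (0:ℝ), ∀ t ∈ Icc (0:ℝ) T, ∀ i, -(δ * Real.exp (lam * t)) < u t i := by
    intro δ hδ
    by_contra hcon
    push_neg at hcon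
    obtain ⟨t₁, ht₁, i₁, hi₁⟩ := hcon
    set S : Set ℝ := ⋃ i : Fin d, (Icc 0 T ∩ (fun t => u t i + δ * Real.exp (lam * t)) ⁻¹' Iic 0)
      with hS
    have hmemS : ∀ t, t ∈ S ↔ t ∈ Icc (0:ℝ) T ∧ ∃ i, u t i + δ * Real.exp (lam * t) ≤ 0 := by
      intro t
      simp only [hS, mem_iUnion, mem_inter_iff, mem_preimage, mem_Iic]
      constructor
      · rintro ⟨i, h1, h2⟩; exact ⟨h1, i, h2⟩
      · rintro ⟨h1, i, h2⟩; exact ⟨i, h1, h2⟩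
    have hSne : S.Nonempty := ⟨t₁, (hmemS t₁).2 ⟨ht₁, i₁, by linarith⟩⟩
    have hSclosed : IsClosed S := by
      refine isClosed_iUnion_of_finite fun i => ?_
      refine ContinuousOn.preimage_isClosed_of_isClosed ?_ isClosed_Icc isClosed_Iic
      exact (hc i).add (continuousOn_const.mul ((Real.continuous_exp.comp
        (continuous_const.mul continuous_id)).continuousOn))
    have hSbdd : BddBelow S := ⟨0, fun t ht => ((hmemS t).1 ht).1.1⟩
    set T' := sInf S with hT'
    have hT'S : T' ∈ S := hSclosed.csInf_mem hSne hSbdd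
    obtain ⟨hT'Icc, i, hi⟩ := (hmemS T').1 hT'S
    have hT'pos : 0 < T' := by
      rcases lt_or_eq_of_le hT'Icc.1 with h | h
      · exact h
      · exfalso
        rw [← h] at hi
        simp only [mul_zero, Real.exp_zero, mul_one] at hi
        have := hu0 i
        nlinarith
    have hbefore : ∀ t, 0 ≤ t → t < T' → ∀ j, 0 < u t j + δ * Real.exp (lam * t) := by
      intro t ht0 htT j
      have htn : t ∉ S := notMem_of_lt_csInf htT hSbdd
      rw [hmemS] at htn
      push_neg at htn
      have htIcc : t ∈ Icc (0:ℝ) T := ⟨ht0, le_trans htT.le hT'Icc.2⟩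
      exact htn htIcc j
    -- boundary values: u T' j ≥ -δ exp(lam T') for all j
    have hbd : ∀ j, 0 ≤ u T' j + δ * Real.exp (lam * T') := by
      intro j
      have hcw : ContinuousWithinAt (fun t => u t j + δ * Real.exp (lam * t)) (Ico 0 T') T' := by
        have h1 : ContinuousWithinAt (fun t => u t j + δ * Real.exp (lam * t)) (Icc 0 T) T' :=
          ((hc j).add (continuousOn_const.mul ((Real.continuous_exp.comp
            (continuous_const.mul continuous_id)).continuousOn))) T' hT'Icc
        exact h1.mono fun x hx => ⟨hx.1, le_trans hx.2.le hT'Icc.2⟩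
      haveI : (nhdsWithin T' (Ico 0 T')).NeBot := by
        rw [← mem_closure_iff_nhdsWithin_neBot, closure_Ico (ne_of_lt hT'pos)]
        exact ⟨hT'pos.le, le_refl _⟩
      refine ge_of_tendsto hcw ?_
      filter_upwards [self_mem_nhdsWithin] with x hx
      exact (hbefore x hx.1 hx.2 j).le
    have hieq : u T' i + δ * Real.exp (lam * T') = 0 := le_antisymm hi (hbd i)
    -- derivative of ψ at T' is ≤ 0
    set D := ∑ j, A T' i j * u T' j with hD
    have hψ : HasDerivAt (fun t => u t i + δ * Real.exp (lam * t))
        (D + δ * (Real.exp (lam * T') * lam)) T' := by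
      refine (hu' T' hT'Icc i).add ?_
      have : HasDerivAt (fun t : ℝ => lam * t) lam T' := by
        simpa using (hasDerivAt_id T').const_mul lam
      exact (this.exp).const_mul δ
    have hψle : D + δ * (Real.exp (lam * T') * lam) ≤ 0 := by
      have htend : Tendsto (slope (fun t => u t i + δ * Real.exp (lam * t)) T')
          (nhdsWithin T' (Iio T')) (nhds (D + δ * (Real.exp (lam * T') * lam))) :=
        (hasDerivAt_iff_tendsto_slope.1 hψ).mono_left
          (nhdsWithin_mono _ fun x hx => ne_of_lt hx)
      refine le_of_tendsto htend ?_
      filter_upwards [Ioo_mem_nhdsLT_of_mem (⟨hT'pos, le_refl T'⟩ : T' ∈ Ioc 0 T')]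
        with x hx
      have hpos : 0 < u x i + δ * Real.exp (lam * x) := hbefore x hx.1.le hx.2 i
      have hslope : slope (fun t => u t i + δ * Real.exp (lam * t)) T' x
          = (u x i + δ * Real.exp (lam * x) - (u T' i + δ * Real.exp (lam * T'))) / (x - T') :=
        slope_def_field _ T' x
      rw [hslope, hieq, sub_zero]
      exact (div_neg_of_pos_of_neg hpos (by linarith [hx.2])).le
    -- lower bound on D
    have hDlb : -(d * (K * (δ * Real.exp (lam * T')))) ≤ D := by
      have he : 0 < δ * Real.exp (lam * T') := by positivity
      have hterm : ∀ j : Fin d, -(K * (δ * Real.exp (lam * T'))) ≤ A T' i j * u T' j := by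
        intro j
        have habs := abs_le.1 (hKb T' hT'Icc i j)
        have huj : -(δ * Real.exp (lam * T')) ≤ u T' j := by linarith [hbd j]
        by_cases hij : j = i
        · subst hij
          have huj' : u T' j = -(δ * Real.exp (lam * T')) := by linarith [hieq]
          rw [huj']
          nlinarith [habs.1, habs.2]
        · have hA := hA0 T' hT'Icc i j (Ne.symm hij)
          nlinarith [habs.2]
      calc -(d * (K * (δ * Real.exp (lam * T'))))
          = ∑ _j : Fin d, -(K * (δ * Real.exp (lam * T'))) := by
            rw [Finset.sum_const, Finset.card_univ, Fintype.card_fin, nsmul_eq_mul]; ring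
        _ ≤ D := Finset.sum_le_sum fun j _ => hterm j
    have : 0 < D + δ * (Real.exp (lam * T') * lam) := by
      have he : 0 < δ * Real.exp (lam * T') := by positivity
      nlinarith [hDlb]
    linarith
  -- conclude
  intro t ht i
  by_contra hneg
  push_neg at hneg
  have hexp : 0 < Real.exp (lam * t) := Real.exp_pos _
  have hδpos : 0 < -(u t i) / (2 * Real.exp (lam * t)) := div_pos (by linarith) (by positivity)
  have h1 := key (-(u t i) / (2 * Real.exp (lam * t))) hδpos t ht i
  have h2 : -(-(u t i) / (2 * Real.exp (lam * t)) * Real.exp (lam * t)) = u t i / 2 := by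
    field_simp
  rw [h2] at h1
  linarith

private lemma dln_expand2 {d : ℕ} (M : Matrix (Fin d) (Fin d) ℝ) (x z : Fin d → ℝ) :
    x ⬝ᵥ (M *ᵥ z) = ∑ i, ∑ j, M i j * (x i * z j) := by
  simp only [dotProduct, Matrix.mulVec, Finset.mul_sum]
  exact Finset.sum_congr rfl fun i _ => Finset.sum_congr rfl fun j _ => by ring

private lemma dln_expand {d : ℕ} (M : Matrix (Fin d) (Fin d) ℝ) (x : Fin d → ℝ) :
    x ⬝ᵥ (M *ᵥ x) = ∑ i, ∑ j, M i j * (x i * x j) := dln_expand2 M x x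

private lemma dln_pd {n d : ℕ} (X : Matrix (Fin n) (Fin d) ℝ) (y : Fin n → ℝ)
    (M : Matrix (Fin d) (Fin d) ℝ) (r : Fin d → ℝ)
    (hM : M = Xᵀ * X) (hr : r = Xᵀ *ᵥ y)
    (hA1 : ∀ i, 0 < r i) (hA2 : ∀ i j, i ≠ j → M i j ≤ 0) :
    ∀ u : Fin d → ℝ, u ≠ 0 → 0 < u ⬝ᵥ (M *ᵥ u) := by
  have hquad : ∀ u : Fin d → ℝ, u ⬝ᵥ (M *ᵥ u) = (X *ᵥ u) ⬝ᵥ (X *ᵥ u) := by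
    intro u
    rw [hM, ← Matrix.mulVec_mulVec, Matrix.dotProduct_mulVec, Matrix.vecMul_transpose]
  have hker : ∀ u : Fin d → ℝ, M *ᵥ u = 0 → u = 0 := by
    intro u hu
    by_contra hne
    obtain ⟨i₀, hi₀⟩ := Function.ne_iff.1 hne
    have h0 : u ⬝ᵥ (M *ᵥ u) = 0 := by rw [hu]; simp
    set a : Fin d → ℝ := fun i => |u i| with ha
    have hMa : a ⬝ᵥ (M *ᵥ a) ≤ u ⬝ᵥ (M *ᵥ u) := by
      rw [dln_expand, dln_expand]
      refine Finset.sum_le_sum fun i _ => Finset.sum_le_sum fun j _ => ?_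
      by_cases hij : i = j
      · subst hij
        simp only [ha, abs_mul_abs_self]; exact le_refl _
      · have h1 : u i * u j ≤ a i * a j := by
          rw [ha]; calc u i * u j ≤ |u i * u j| := le_abs_self _
            _ = |u i| * |u j| := abs_mul _ _
        exact mul_le_mul_of_nonpos_left h1 (hA2 i j hij)
    have hXa : X *ᵥ a = 0 := by
      have h2 : (X *ᵥ a) ⬝ᵥ (X *ᵥ a) ≤ 0 := by rw [← hquad]; rw [h0] at hMa; exact hMa
      have h3 : (0:ℝ) ≤ (X *ᵥ a) ⬝ᵥ (X *ᵥ a) :=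
        Finset.sum_nonneg fun i _ => mul_self_nonneg _
      exact (dotProduct_self_eq_zero).1 (le_antisymm h2 h3)
    have hra : r ⬝ᵥ a = 0 := by
      rw [hr, Matrix.mulVec_transpose, ← Matrix.dotProduct_mulVec, hXa,
        dotProduct_zero]
    have hpos : 0 < r ⬝ᵥ a := by
      refine Finset.sum_pos' (fun j _ => mul_nonneg (hA1 j).le (abs_nonneg _)) ⟨i₀,
        Finset.mem_univ i₀, mul_pos (hA1 i₀) ?_⟩
      simp only [ha]
      exact abs_pos.2 (by simpa using hi₀)
    linarith
  intro u hu
  have h3 : (0:ℝ) ≤ (X *ᵥ u) ⬝ᵥ (X *ᵥ u) := Finset.sum_nonneg fun i _ => mul_self_nonneg _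
  rw [hquad]
  rcases lt_or_eq_of_le h3 with h | h
  · exact h
  · exfalso
    apply hu
    apply hker
    have hXu : X *ᵥ u = 0 := (dotProduct_self_eq_zero).1 h.symm
    rw [hM, ← Matrix.mulVec_mulVec, hXu, Matrix.mulVec_zero]

private lemma dln_inv_nonneg {d : ℕ} (M : Matrix (Fin d) (Fin d) ℝ)
    (hdet : IsUnit M.det) (hPD : ∀ u : Fin d → ℝ, u ≠ 0 → 0 < u ⬝ᵥ (M *ᵥ u))
    (hA2 : ∀ i j, i ≠ j → M i j ≤ 0) :
    ∀ i j, 0 ≤ M⁻¹ i j := by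
  have key : ∀ b : Fin d → ℝ, (∀ i, 0 ≤ b i) → ∀ i, 0 ≤ (M⁻¹ *ᵥ b) i := by
    intro b hb
    set u := M⁻¹ *ᵥ b with hu
    have hMu : M *ᵥ u = b := by
      rw [hu, Matrix.mulVec_mulVec, Matrix.mul_nonsing_inv _ hdet, Matrix.one_mulVec]
    set un : Fin d → ℝ := fun i => max (-(u i)) 0 with hun
    set up : Fin d → ℝ := fun i => max (u i) 0 with hup
    have hsplit : up - un = u := by
      funext i; simp only [Pi.sub_apply, hun, hup, max_zero_sub_max_neg_zero_eq_self]
    have hun0 : un = 0 := by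
      by_contra hne
      have h1 : 0 < un ⬝ᵥ (M *ᵥ un) := hPD un hne
      have h2 : 0 ≤ un ⬝ᵥ b :=
        Finset.sum_nonneg fun i _ => mul_nonneg (le_max_right _ _) (hb i)
      have h3 : un ⬝ᵥ (M *ᵥ up) ≤ 0 := by
        rw [dln_expand2]
        refine Finset.sum_nonpos fun i _ => Finset.sum_nonpos fun j _ => ?_
        by_cases hij : i = j
        · subst hij
          rcases le_total (u i) 0 with h | h
          · have : up i = 0 := max_eq_right h
            simp [this]
          · have : un i = 0 := max_eq_right (by linarith : -(u i) ≤ 0)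
            simp [this]
        · exact mul_nonpos_of_nonpos_of_nonneg (hA2 i j hij)
            (mul_nonneg (le_max_right _ _) (le_max_right _ _))
      have h4 : un ⬝ᵥ (M *ᵥ u) = un ⬝ᵥ b := by rw [hMu]
      have h5 : M *ᵥ u = M *ᵥ up - M *ᵥ un := by
        rw [← hsplit, Matrix.mulVec_sub]
      have h6 : un ⬝ᵥ (M *ᵥ u) = un ⬝ᵥ (M *ᵥ up) - un ⬝ᵥ (M *ᵥ un) := by
        rw [h5, dotProduct_sub]
      linarith
    intro i
    have h7 : un i = 0 := congrFun hun0 i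
    have h8 : max (-(u i)) 0 = 0 := h7
    have h9 := le_max_left (-(u i)) 0
    rw [h8] at h9
    linarith
  intro i j
  have hb : ∀ m, (0:ℝ) ≤ (Pi.single j 1 : Fin d → ℝ) m := by
    intro m
    rw [Pi.single_apply]
    rcases eq_or_ne m j with h | h <;> simp [h]
  have := key (Pi.single j 1) hb i
  rw [Matrix.mulVec_single] at this
  simpa using this

private lemma dln_mulVec_pos {d : ℕ} (M : Matrix (Fin d) (Fin d) ℝ)
    (hdet : IsUnit M.det) (hPD : ∀ u : Fin d → ℝ, u ≠ 0 → 0 < u ⬝ᵥ (M *ᵥ u))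
    (hA2 : ∀ i j, i ≠ j → M i j ≤ 0) :
    ∀ b : Fin d → ℝ, (∀ i, 0 < b i) → ∀ i, 0 < (M⁻¹ *ᵥ b) i := by
  intro b hb i
  have hN := dln_inv_nonneg M hdet hPD hA2
  set u := M⁻¹ *ᵥ b with hu
  have hu0 : ∀ m, 0 ≤ u m := by
    intro m
    rw [hu]
    simp only [Matrix.mulVec, dotProduct]
    exact Finset.sum_nonneg fun j _ => mul_nonneg (hN m j) (hb j).le
  have hMu : M *ᵥ u = b := by
    rw [hu, Matrix.mulVec_mulVec, Matrix.mul_nonsing_inv _ hdet, Matrix.one_mulVec]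
  have hMii : 0 < M i i := by
    have h1 : (Pi.single i 1 : Fin d → ℝ) ≠ 0 := by
      intro h; have := congrFun h i; simp at this
    have h2 := hPD _ h1
    rw [Matrix.mulVec_single] at h2
    simpa [dotProduct, Pi.single_apply, ite_mul] using h2
  have hbi : M i i * u i + ∑ j ∈ Finset.univ.erase i, M i j * u j = b i := by
    rw [Finset.add_sum_erase (s := Finset.univ) (f := fun j => M i j * u j) (Finset.mem_univ i)]
    have := congrFun hMu i
    simpa [Matrix.mulVec, dotProduct] using this
  have herase : ∑ j ∈ Finset.univ.erase i, M i j * u j ≤ 0 :=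
    Finset.sum_nonpos fun j hj =>
      mul_nonpos_of_nonpos_of_nonneg (hA2 i j (Ne.symm (Finset.mem_erase.1 hj).1)) (hu0 j)
  have : 0 < M i i * u i := by have := hb i; linarith
  nlinarith [hu0 i]


/-- Under (A1) and (A2), for every `s > s_* = maxᵢ (M⁻¹k)ᵢ / (M⁻¹r)ᵢ`,
the DLN trajectory satisfies `θ^{(ε)}(s log(1/ε)) → M⁻¹r` as `ε → 0⁺`, where `M⁻¹r` is
the unique minimizer of `f`. -/
theorem dln_convergence_to_minimizer (n d : ℕ) (hn : 0 < n) (hd : 0 < d)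
    (X : Matrix (Fin n) (Fin d) ℝ) (y : Fin n → ℝ)
    (M : Matrix (Fin d) (Fin d) ℝ) (r : Fin d → ℝ)
    (hM : M = Xᵀ * X) (hr : r = Xᵀ *ᵥ y)
    (hA1 : ∀ i, 0 < r i)
    (hA2 : ∀ i j, i ≠ j → M i j ≤ 0)
    (C k : Fin d → ℝ) (hC : ∀ i, 0 < C i) (hk : ∀ i, 0 < k i)
    (θ : ℝ → ℝ → Fin d → ℝ)
    (hθinit : ∀ ε ∈ Set.Ioc (0 : ℝ) 1, ∀ i, θ ε 0 i = C i * ε ^ k i)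
    (hθode : ∀ ε ∈ Set.Ioc (0 : ℝ) 1, ∀ t ≥ (0 : ℝ), ∀ i,
      HasDerivAt (fun τ => θ ε τ i) (θ ε t i * (r i - (M *ᵥ θ ε t) i)) t) :
    ∀ s : ℝ, (⨆ i : Fin d, (M⁻¹ *ᵥ k) i / (M⁻¹ *ᵥ r) i) < s →
      Filter.Tendsto (fun ε => θ ε (s * Real.log (1 / ε)))
        (nhdsWithin 0 (Set.Ioi 0)) (nhds (M⁻¹ *ᵥ r)) := by
  intro s hs
  classical
  haveI : Nonempty (Fin d) := ⟨⟨0, hd⟩⟩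
  -- matrix facts
  have hPD : ∀ u : Fin d → ℝ, u ≠ 0 → 0 < u ⬝ᵥ (M *ᵥ u) := dln_pd X y M r hM hr hA1 hA2
  have hdet : IsUnit M.det := by
    rw [isUnit_iff_ne_zero]
    intro h
    obtain ⟨v0, hv0ne, hv0⟩ := (Matrix.exists_mulVec_eq_zero_iff).2 h
    have := hPD v0 hv0ne
    rw [hv0] at this
    simp at this
  set N := M⁻¹ with hNdef
  have hN : ∀ i j, 0 ≤ N i j := dln_inv_nonneg M hdet hPD hA2
  set v := N *ᵥ r with hvdef
  have hvpos : ∀ i, 0 < v i := dln_mulVec_pos M hdet hPD hA2 r hA1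
  have hNkpos : ∀ i, 0 < (N *ᵥ k) i := dln_mulVec_pos M hdet hPD hA2 k hk
  have hNM : ∀ x : Fin d → ℝ, N *ᵥ (M *ᵥ x) = x := by
    intro x
    rw [hNdef, Matrix.mulVec_mulVec, Matrix.nonsing_inv_mul _ hdet, Matrix.one_mulVec]
  have hMv : M *ᵥ v = r := by
    rw [hvdef, hNdef, Matrix.mulVec_mulVec, Matrix.mul_nonsing_inv _ hdet, Matrix.one_mulVec]
  have hMvi : ∀ i, ∑ j, M i j * v j = r i := by
    intro i
    have := congrFun hMv i
    simpa [Matrix.mulVec, dotProduct] using this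
  have hNmv : ∀ (w : Fin d → ℝ) i, (N *ᵥ w) i = ∑ j, N i j * w j := by
    intro w i; simp [Matrix.mulVec, dotProduct]
  -- choice of intermediate exponent s'
  obtain ⟨s', hs'1, hs'2⟩ := exists_between hs
  have hbdd : BddAbove (Set.range fun i => (N *ᵥ k) i / v i) := (Set.finite_range _).bddAbove
  have hsup : ∀ i, (N *ᵥ k) i / v i ≤ ⨆ i, (N *ᵥ k) i / v i := fun i => le_ciSup hbdd i
  have hs'pos : 0 < s' :=
    lt_of_le_of_lt (le_trans (div_pos (hNkpos ⟨0, hd⟩) (hvpos ⟨0, hd⟩)).le (hsup ⟨0, hd⟩)) hs'1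
  have hspos : 0 < s := lt_trans hs'pos hs'2
  set β : Fin d → ℝ := fun i => v i - (N *ᵥ k) i / s' with hβdef
  have hβpos : ∀ i, 0 < β i := by
    intro i
    have h1 : (N *ᵥ k) i / v i < s' := lt_of_le_of_lt (hsup i) hs'1
    have h2 : (N *ᵥ k) i < s' * v i := (div_lt_iff₀ (hvpos i)).1 h1
    have h3 : (N *ᵥ k) i / s' < v i := (div_lt_iff₀ hs'pos).2 (by linarith)
    exact sub_pos.2 h3
  set a : Fin d → ℝ := fun i => β i / 2 with hadef
  have hapos : ∀ i, 0 < a i := fun i => half_pos (hβpos i)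
  set q : Fin d → ℝ := fun i => ∑ j, N i j * Real.log (v j) with hqdef
  set bb : Fin d → ℝ := fun i => ∑ j, N i j * Real.log (C j) with hbbdef
  set c' : Fin d → ℝ := fun i => ∑ j, N i j * (Real.log (v j) - Real.log (a j)) with hc'def
  -- log(1/ε) → ∞
  have hL : Tendsto (fun ε : ℝ => Real.log (1/ε)) (nhdsWithin 0 (Set.Ioi 0)) atTop := by
    have h1 : Tendsto (fun ε : ℝ => -Real.log ε) (nhdsWithin 0 (Set.Ioi 0)) atTop :=
      tendsto_neg_atTop_iff.mpr Real.tendsto_log_nhdsGT_zero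
    exact h1.congr fun ε => by rw [one_div, Real.log_inv]
  -- eventual smallness facts
  have hrpow0 : ∀ j : Fin d, Tendsto (fun ε : ℝ => C j * ε ^ k j)
      (nhdsWithin 0 (Set.Ioi 0)) (nhds 0) := by
    intro j
    have h1 : ContinuousAt (fun x : ℝ => x ^ k j) 0 :=
      Real.continuousAt_rpow_const 0 (k j) (Or.inr (hk j).le)
    have h2 : Tendsto (fun ε : ℝ => ε ^ k j) (nhdsWithin 0 (Set.Ioi 0)) (nhds 0) := by
      have := h1.tendsto.mono_left (nhdsWithin_le_nhds : nhdsWithin (0:ℝ) (Set.Ioi 0) ≤ nhds 0)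
      rwa [Real.zero_rpow (ne_of_gt (hk j))] at this
    simpa using h2.const_mul (C j)
  have E1 : ∀ᶠ ε in nhdsWithin (0:ℝ) (Set.Ioi 0), ε ∈ Set.Ioo (0:ℝ) 1 :=
    Ioo_mem_nhdsGT_of_mem ⟨le_refl 0, zero_lt_one⟩
  have E2 : ∀ᶠ ε in nhdsWithin (0:ℝ) (Set.Ioi 0), ∀ i,
      (∑ j, M i j * (C j * ε ^ k j)) ≤ r i := by
    rw [eventually_all]
    intro i
    have h1 : Tendsto (fun ε : ℝ => ∑ j, M i j * (C j * ε ^ k j))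
        (nhdsWithin 0 (Set.Ioi 0)) (nhds 0) := by
      have := tendsto_finset_sum Finset.univ
        (fun j _ => ((hrpow0 j).const_mul (M i j)))
      simpa using this
    exact h1.eventually_le_const (hA1 i)
  have E3 : ∀ᶠ ε in nhdsWithin (0:ℝ) (Set.Ioi 0), ∀ i, C i * ε ^ k i ≤ v i := by
    rw [eventually_all]
    intro i
    exact (hrpow0 i).eventually_le_const (hvpos i)
  have E4 : ∀ᶠ ε in nhdsWithin (0:ℝ) (Set.Ioi 0), ∀ i,
      q i - bb i ≤ β i / 2 * (s' * Real.log (1/ε)) := by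
    rw [eventually_all]
    intro i
    have h1 : Tendsto (fun ε : ℝ => β i / 2 * (s' * Real.log (1/ε)))
        (nhdsWithin 0 (Set.Ioi 0)) atTop :=
      (hL.const_mul_atTop hs'pos).const_mul_atTop (half_pos (hβpos i))
    exact h1.eventually_ge_atTop _
  -- the core estimate
  have core : ∀ᶠ ε in nhdsWithin (0:ℝ) (Set.Ioi 0), ∀ i,
      v i - c' i / ((s - s') * Real.log (1/ε)) ≤ θ ε (s * Real.log (1/ε)) i ∧
      θ ε (s * Real.log (1/ε)) i ≤ v i := by
    filter_upwards [E1, E2, E3, E4] with ε hε1 hε2 hε3 hε4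
    have hεIoc : ε ∈ Set.Ioc (0:ℝ) 1 := ⟨hε1.1, hε1.2.le⟩
    set L := Real.log (1/ε) with hLdef
    have hLeq : L = -Real.log ε := by rw [hLdef, one_div, Real.log_inv]
    have hLpos : 0 < L := by
      have := Real.log_neg hε1.1 hε1.2
      rw [hLeq]; linarith
    set T := s * L with hTdef
    set T1 := s' * L with hT1def
    have hT1pos : 0 < T1 := mul_pos hs'pos hLpos
    have hT1T : T1 < T := by
      have h := mul_lt_mul_of_pos_right hs'2 hLpos
      rw [hTdef, hT1def]; exact h
    have hTpos : 0 < T := lt_trans hT1pos hT1T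
    have hode : ∀ t ∈ Icc (0:ℝ) T, ∀ i,
        HasDerivAt (fun τ => θ ε τ i) (θ ε t i * (r i - (M *ᵥ θ ε t) i)) t :=
      fun t ht i => hθode ε hεIoc t ht.1 i
    set g : ℝ → Fin d → ℝ := fun t i => θ ε t i * (r i - (M *ᵥ θ ε t) i) with hgdef
    have hgeq : ∀ t i, g t i = θ ε t i * (r i - (M *ᵥ θ ε t) i) := fun t i => rfl
    have hcθ : ∀ i, ContinuousOn (fun t => θ ε t i) (Icc (0:ℝ) T) :=
      fun i t ht => (hode t ht i).continuousAt.continuousWithinAt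
    have hMθ : ∀ t i, (M *ᵥ θ ε t) i = ∑ j, M i j * θ ε t j := by
      intro t i; simp [Matrix.mulVec, dotProduct]
    have hcMθ : ∀ i, ContinuousOn (fun t => (M *ᵥ θ ε t) i) (Icc (0:ℝ) T) := by
      intro i
      have e : (fun t => (M *ᵥ θ ε t) i) = fun t => ∑ j, M i j * θ ε t j :=
        funext fun t => hMθ t i
      rw [e]
      exact continuousOn_finset_sum _ fun j _ => continuousOn_const.mul (hcθ j)
    have hθ0 : ∀ i, θ ε 0 i = C i * ε ^ k i := hθinit ε hεIoc
    have hθ0pos : ∀ i, 0 < θ ε 0 i := by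
      intro i; rw [hθ0 i]
      exact mul_pos (hC i) (Real.rpow_pos_of_pos hε1.1 _)
    -- nonnegativity of θ
    have hθnn : ∀ t ∈ Icc (0:ℝ) T, ∀ i, 0 ≤ θ ε t i := by
      refine coop_nonneg (fun t i j => if i = j then r i - (M *ᵥ θ ε t) i else 0)
        (fun t i => θ ε t i) T ?_ ?_ ?_ (fun i => (hθ0pos i).le)
      · intro t ht i
        have h1 := hode t ht i
        have h2 : ∑ j, (if i = j then r i - (M *ᵥ θ ε t) i else 0) * θ ε t j
            = θ ε t i * (r i - (M *ᵥ θ ε t) i) := by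
          simp [ite_mul, Finset.sum_ite_eq, mul_comm]
        rw [h2]; exact h1
      · intro t ht i j hij; simp [hij]
      · refine dln_bound_aux T _ ?_
        intro i j
        by_cases hij : i = j
        · subst hij
          simp only [if_pos rfl]
          exact continuousOn_const.sub (hcMθ i)
        · simp only [if_neg hij]; exact continuousOn_const
    -- nonnegativity of the derivative g
    have hg' : ∀ t ∈ Icc (0:ℝ) T, ∀ i, HasDerivAt (fun τ => g τ i)
        (∑ j, ((if i = j then r i - (M *ᵥ θ ε t) i else 0) - θ ε t i * M i j) * g t j) t := by
      intro t ht i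
      have h1 : HasDerivAt (fun τ => θ ε τ i) (g t i) t := hode t ht i
      have h3 : HasDerivAt (fun τ => (M *ᵥ θ ε τ) i) (∑ j, M i j * g t j) t := by
        have h4 : HasDerivAt (fun τ => ∑ j, M i j * θ ε τ j) (∑ j, M i j * g t j) t :=
          HasDerivAt.fun_sum fun j _ => (hode t ht j).const_mul (M i j)
        have h5 : (fun τ => (M *ᵥ θ ε τ) i) = fun τ => ∑ j, M i j * θ ε τ j :=
          funext fun τ => hMθ τ i
        rw [h5]; exact h4
      have h2 : HasDerivAt (fun τ => r i - (M *ᵥ θ ε τ) i) (0 - ∑ j, M i j * g t j) t :=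
        (hasDerivAt_const t (r i)).sub h3
      have h6 := h1.mul h2
      have h7 : ∑ j, ((if i = j then r i - (M *ᵥ θ ε t) i else 0) - θ ε t i * M i j) * g t j
          = g t i * (r i - (M *ᵥ θ ε t) i) + θ ε t i * (0 - ∑ j, M i j * g t j) := by
        have e1 : ∀ j : Fin d,
            ((if i = j then r i - (M *ᵥ θ ε t) i else 0) - θ ε t i * M i j) * g t j
            = (if i = j then (r i - (M *ᵥ θ ε t) i) * g t j else 0)
              - θ ε t i * (M i j * g t j) := by
          intro j; by_cases hij : i = j
          · simp only [if_pos hij]; ring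
          · simp only [if_neg hij]; ring
        rw [Finset.sum_congr rfl fun j _ => e1 j, Finset.sum_sub_distrib,
          Finset.sum_ite_eq, ← Finset.mul_sum]
        simp only [Finset.mem_univ, if_pos]
        ring
      rw [h7]; exact h6
    have hgnn : ∀ t ∈ Icc (0:ℝ) T, ∀ i, 0 ≤ g t i := by
      refine coop_nonneg _ g T hg' ?_ ?_ ?_
      · intro t ht i j hij
        simp only [if_neg hij, zero_sub]
        exact neg_nonneg.2 (mul_nonpos_iff.2 (Or.inl ⟨hθnn t ht i, hA2 i j hij⟩))
      · refine dln_bound_aux T _ ?_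
        intro i j
        refine ContinuousOn.sub ?_ ((hcθ i).mul continuousOn_const)
        by_cases hij : i = j
        · subst hij
          simp only [if_pos rfl]
          exact continuousOn_const.sub (hcMθ i)
        · simp only [if_neg hij]; exact continuousOn_const
      · intro i
        have h8 : (M *ᵥ θ ε 0) i ≤ r i := by
          rw [hMθ 0 i]
          calc ∑ j, M i j * θ ε 0 j = ∑ j, M i j * (C j * ε ^ k j) :=
              Finset.sum_congr rfl fun j _ => by rw [hθ0 j]
            _ ≤ r i := hε2 i
        rw [hgeq]
        exact mul_nonneg (hθ0pos i).le (by linarith)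
    -- monotonicity
    have hmono : ∀ i, MonotoneOn (fun t => θ ε t i) (Icc (0:ℝ) T) := by
      intro i
      refine monotoneOn_of_deriv_nonneg (convex_Icc 0 T) (hcθ i) ?_ ?_
      · intro t ht
        rw [interior_Icc] at ht
        exact (hode t (Ioo_subset_Icc_self ht) i).differentiableAt.differentiableWithinAt
      · intro t ht
        rw [interior_Icc] at ht
        rw [(hode t (Ioo_subset_Icc_self ht) i).deriv]
        exact hgnn t (Ioo_subset_Icc_self ht) i
    have hθpos : ∀ t ∈ Icc (0:ℝ) T, ∀ i, 0 < θ ε t i := by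
      intro t ht i
      have h1 := hmono i (left_mem_Icc.2 hTpos.le) ht ht.1
      linarith [hθ0pos i]
    -- upper bound θ ≤ v
    have hθle : ∀ t ∈ Icc (0:ℝ) T, ∀ i, θ ε t i ≤ v i := by
      have h0 : ∀ t ∈ Icc (0:ℝ) T, ∀ i, 0 ≤ v i - θ ε t i := by
        refine coop_nonneg (fun t i j => -(θ ε t i * M i j))
          (fun t i => v i - θ ε t i) T ?_ ?_ ?_ ?_
        · intro t ht i
          have h1 : HasDerivAt (fun τ => v i - θ ε τ i) (0 - g t i) t :=
            (hasDerivAt_const t (v i)).sub (hode t ht i)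
          have h2 : ∑ j, -(θ ε t i * M i j) * (v j - θ ε t j) = 0 - g t i := by
            have e1 : ∀ j : Fin d, -(θ ε t i * M i j) * (v j - θ ε t j)
                = θ ε t i * (M i j * θ ε t j) - θ ε t i * (M i j * v j) := fun j => by ring
            rw [Finset.sum_congr rfl fun j _ => e1 j, Finset.sum_sub_distrib,
              ← Finset.mul_sum, ← Finset.mul_sum, hMvi i, ← hMθ t i, hgeq]
            ring
          rw [← h2] at h1; exact h1
        · intro t ht i j hij
          exact neg_nonneg.2 (mul_nonpos_iff.2 (Or.inl ⟨hθnn t ht i, hA2 i j hij⟩))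
        · refine dln_bound_aux T _ ?_
          intro i j
          exact ((hcθ i).mul continuousOn_const).neg
        · intro i
          show 0 ≤ v i - θ ε 0 i
          rw [hθ0 i]
          linarith [hε3 i]
      intro t ht i; linarith [h0 t ht i]
    -- the auxiliary function p
    set p : Fin d → ℝ → ℝ := fun i t => ∑ j, N i j * Real.log (θ ε t j) with hpdef
    have hpeq : ∀ i t, p i t = ∑ j, N i j * Real.log (θ ε t j) := fun i t => rfl
    have hqeq : ∀ i, q i = ∑ j, N i j * Real.log (v j) := fun i => rfl
    have hbbeq : ∀ i, bb i = ∑ j, N i j * Real.log (C j) := fun i => rfl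
    have hc'eq : ∀ i, c' i = ∑ j, N i j * (Real.log (v j) - Real.log (a j)) := fun i => rfl
    have hp' : ∀ t ∈ Icc (0:ℝ) T, ∀ i, HasDerivAt (p i) (v i - θ ε t i) t := by
      intro t ht i
      have h1 : HasDerivAt (fun τ => ∑ j, N i j * Real.log (θ ε τ j))
          (∑ j, N i j * (g t j / θ ε t j)) t :=
        HasDerivAt.fun_sum fun j _ =>
          ((hode t ht j).log (ne_of_gt (hθpos t ht j))).const_mul (N i j)
      have h2 : ∑ j, N i j * (g t j / θ ε t j) = v i - θ ε t i := by
        have e1 : ∀ j : Fin d, g t j / θ ε t j = r j - (M *ᵥ θ ε t) j := by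
          intro j
          rw [hgeq]
          exact mul_div_cancel_left₀ _ (ne_of_gt (hθpos t ht j))
        rw [Finset.sum_congr rfl fun j _ => by rw [e1 j]]
        have e2 : ∑ j, N i j * (r j - (M *ᵥ θ ε t) j)
            = (∑ j, N i j * r j) - ∑ j, N i j * (M *ᵥ θ ε t) j := by
          rw [← Finset.sum_sub_distrib]
          exact Finset.sum_congr rfl fun j _ => by ring
        rw [e2, ← hNmv r i, ← hNmv (M *ᵥ θ ε t) i, hNM (θ ε t)]
      rw [← h2]; exact h1
    have hpc : ∀ i, ContinuousOn (p i) (Icc (0:ℝ) T) :=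
      fun i t ht => (hp' t ht i).continuousAt.continuousWithinAt
    -- phase 1 : lower bound at time T1
    have hpTle : ∀ t ∈ Icc (0:ℝ) T, ∀ i, p i t ≤ q i := by
      intro t ht i
      rw [hpeq, hqeq]
      refine Finset.sum_le_sum fun j _ => mul_le_mul_of_nonneg_left ?_ (hN i j)
      exact Real.log_le_log (hθpos t ht j) (hθle t ht j)
    have hT1mem : T1 ∈ Icc (0:ℝ) T := ⟨hT1pos.le, hT1T.le⟩
    have hTmem : T ∈ Icc (0:ℝ) T := right_mem_Icc.2 hTpos.le
    have hphase1 : ∀ i, a i ≤ θ ε T1 i := by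
      intro i
      have hsub : Icc (0:ℝ) T1 ⊆ Icc (0:ℝ) T := Icc_subset_Icc le_rfl hT1T.le
      obtain ⟨ξ, hξ, hξeq⟩ := exists_hasDerivAt_eq_slope (p i) (fun t => v i - θ ε t i)
        hT1pos ((hpc i).mono hsub) (fun x hx => hp' x (hsub (Ioo_subset_Icc_self hx)) i)
      rw [sub_zero] at hξeq
      have hξeq' : v i - θ ε ξ i = (p i T1 - p i 0) / T1 := hξeq
      have hp0 : p i 0 = bb i - L * (N *ᵥ k) i := by
        rw [hpeq]
        have e1 : ∀ j : Fin d, Real.log (θ ε 0 j) = Real.log (C j) + k j * Real.log ε := by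
          intro j
          rw [hθ0 j, Real.log_mul (ne_of_gt (hC j))
            (ne_of_gt (Real.rpow_pos_of_pos hε1.1 _)), Real.log_rpow hε1.1]
        rw [Finset.sum_congr rfl fun j _ => by rw [e1 j]]
        have e2 : ∑ j, N i j * (Real.log (C j) + k j * Real.log ε)
            = (∑ j, N i j * Real.log (C j)) + (∑ j, N i j * k j) * Real.log ε := by
          rw [Finset.sum_mul, ← Finset.sum_add_distrib]
          exact Finset.sum_congr rfl fun j _ => by ring
        have e3 : Real.log ε = -L := by rw [hLeq]; ring
        rw [e2, ← hNmv k i, e3, hbbeq i]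
        ring
      have hub : (p i T1 - p i 0) / T1 ≤ β i / 2 + (N *ᵥ k) i / s' := by
        have h1 : p i T1 - p i 0 ≤ q i - bb i + L * (N *ᵥ k) i := by
          rw [hp0]; linarith [hpTle T1 hT1mem i]
        have h3 : (q i - bb i) / T1 ≤ β i / 2 := by
          rw [div_le_iff₀ hT1pos]
          calc q i - bb i ≤ β i / 2 * (s' * L) := hε4 i
            _ = β i / 2 * T1 := by rw [hT1def]
        have h4 : (L * (N *ᵥ k) i) / T1 = (N *ᵥ k) i / s' := by
          rw [hT1def]
          field_simp
        calc (p i T1 - p i 0) / T1 ≤ (q i - bb i + L * (N *ᵥ k) i) / T1 :=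
            (div_le_div_iff_of_pos_right hT1pos).2 h1
          _ = (q i - bb i) / T1 + (L * (N *ᵥ k) i) / T1 := add_div _ _ _
          _ ≤ β i / 2 + (N *ᵥ k) i / s' := by rw [h4]; linarith
      have hβi : β i = v i - (N *ᵥ k) i / s' := rfl
      have hai : a i = β i / 2 := rfl
      have hξT : θ ε ξ i ≤ θ ε T1 i :=
        hmono i (hsub (Ioo_subset_Icc_self hξ)) hT1mem hξ.2.le
      linarith
    -- phase 2 : conclusion
    intro i
    constructor
    · obtain ⟨ξ, hξ, hξeq⟩ := exists_hasDerivAt_eq_slope (p i) (fun t => v i - θ ε t i)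
        hT1T ((hpc i).mono (Icc_subset_Icc hT1pos.le le_rfl))
        (fun x hx => hp' x ⟨(lt_trans hT1pos hx.1).le, hx.2.le⟩ i)
      have hξeq' : v i - θ ε ξ i = (p i T - p i T1) / (T - T1) := hξeq
      have hξmem : ξ ∈ Icc (0:ℝ) T := ⟨(lt_trans hT1pos hξ.1).le, hξ.2.le⟩
      have hpT1lb : ∑ j, N i j * Real.log (a j) ≤ p i T1 := by
        rw [hpeq]
        refine Finset.sum_le_sum fun j _ => mul_le_mul_of_nonneg_left ?_ (hN i j)
        exact Real.log_le_log (hapos j) (hphase1 j)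
      have hpdiff : p i T - p i T1 ≤ c' i := by
        have e : c' i = q i - ∑ j, N i j * Real.log (a j) := by
          rw [hc'eq, hqeq, ← Finset.sum_sub_distrib]
          exact Finset.sum_congr rfl fun j _ => by ring
        linarith [hpTle T hTmem i]
      have hTT1 : T - T1 = (s - s') * L := by rw [hTdef, hT1def]; ring
      have hTT1pos : 0 < T - T1 := by linarith
      have h5 : (p i T - p i T1) / (T - T1) ≤ c' i / (T - T1) :=
        (div_le_div_iff_of_pos_right hTT1pos).2 hpdiff
      rw [hTT1] at h5
      rw [hTT1] at hξeq'
      have hξT : θ ε ξ i ≤ θ ε T i := hmono i hξmem hTmem hξ.2.le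
      linarith
    · exact hθle T hTmem i
  -- conclusion by squeezing
  rw [tendsto_pi_nhds]
  intro i
  have hlow : Tendsto (fun ε => v i - c' i / ((s - s') * Real.log (1/ε)))
      (nhdsWithin 0 (Set.Ioi 0)) (nhds (v i)) := by
    have h1 : Tendsto (fun ε : ℝ => c' i / ((s - s') * Real.log (1/ε)))
        (nhdsWithin 0 (Set.Ioi 0)) (nhds 0) :=
      Tendsto.div_atTop tendsto_const_nhds (hL.const_mul_atTop (by linarith))
    simpa using tendsto_const_nhds.sub h1
  exact tendsto_of_tendsto_of_tendsto_of_le_of_le' hlow tendsto_const_nhds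
    (core.mono fun ε h => (h i).1) (core.mono fun ε h => (h i).2)
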